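/- Consider the scalar delay equation e'(t) = −a·e(t) + b·e(t−τ) with a > |b| ≥ 0 and constant delay τ ≥ 0 satisfying τ < (a − |b|)/(|b|·(a + |b|)) (interpreted as no constraint when b = 0). Then every solution satisfies e(t) → 0 as t → ∞. -/

import Mathlib

open Filter

/-- Scalar prototype of the delay-stability result: for `e'(t) = -a e(t) + b e(t-τ)`
with `a > |b|` and small enough delay, every solution tends to zero. -/
theorem stmt_15 (a b τ : ℝ) (ha : |b| < a) (hτ : 0 ≤ τ)
    (hτb : b ≠ 0 → τ < (a - |b|) / (|b| * (a + |b|)))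
    (e : ℝ → ℝ) (he : Differentiable ℝ e)
    (hODE : ∀ t, deriv e t = -a * e t + b * e (t - τ)) :
    Tendsto e atTop (nhds 0) := by
  have hβ0 : (0:ℝ) ≤ |b| := abs_nonneg b
  set β := |b| with hβdef
  set α := 2*a - β with hαdef
  have hβα : β < α := by simp only [hαdef]; linarith
  -- choose a decay rate γ
  obtain ⟨γ, hγ, hγ0⟩ : ∃ γ, (γ + β * Real.exp (γ * τ) < α) ∧ 0 < γ := by
    have hc : ContinuousAt (fun γ : ℝ => γ + β * Real.exp (γ * τ)) 0 := by fun_prop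
    have h0 : (0:ℝ) + β * Real.exp (0 * τ) = β := by simp
    have hev : ∀ᶠ γ in nhds (0:ℝ), γ + β * Real.exp (γ * τ) < α := by
      have := hc.tendsto
      rw [h0] at this
      exact this.eventually_lt_const hβα
    have hev2 : ∀ᶠ γ in nhdsWithin (0:ℝ) (Set.Ioi 0),
        (γ + β * Real.exp (γ * τ) < α) ∧ 0 < γ :=
      (hev.filter_mono nhdsWithin_le_nhds).and (eventually_mem_nhdsWithin)
    exact hev2.exists
  -- the Lyapunov function
  set V : ℝ → ℝ := fun t => (e t)^2 with hVdef
  have hVd : ∀ t, HasDerivAt V (2 * e t * deriv e t) t := by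
    intro t
    have := ((he t).hasDerivAt).pow 2
    exact this.congr_deriv (by norm_num)
  have hVcont : Continuous V := by rw [hVdef]; exact he.continuous.pow 2
  have hVnn : ∀ t, 0 ≤ V t := fun t => sq_nonneg _
  have hVineq : ∀ t, deriv V t ≤ -α * V t + β * V (t - τ) := by
    intro t
    have hd : deriv V t = 2 * e t * (-a * e t + b * e (t - τ)) := by
      rw [(hVd t).deriv, hODE t]
    rw [hd]
    simp only [hVdef, hαdef]
    nlinarith [sq_nonneg (e t - e (t - τ)), sq_nonneg (e t + e (t - τ)),
      le_abs_self b, neg_abs_le b, sq_nonneg (e t), sq_nonneg (e (t - τ))]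
  -- bound on initial interval
  set K : ℝ := sSup (V '' Set.Icc (-τ) 0) with hKdef
  have hKmem : ∀ s ∈ Set.Icc (-τ) 0, V s ≤ K := by
    intro s hs
    exact le_csSup ((isCompact_Icc.image hVcont).bddAbove) (Set.mem_image_of_mem _ hs)
  have hK0 : 0 ≤ K := le_trans (hVnn 0) (hKmem 0 ⟨neg_nonpos.mpr hτ, le_refl 0⟩)
  set C : ℝ := K + 1 with hCdef
  have hC0 : 0 < C := by linarith
  set W : ℝ → ℝ := fun t => C * Real.exp (-γ * t) with hWdef
  have hW0 : ∀ t, 0 < W t := fun t => mul_pos hC0 (Real.exp_pos _)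
  have hWd : ∀ t, HasDerivAt W (-γ * W t) t := by
    intro t
    have h1 : HasDerivAt (fun s : ℝ => -γ * s) (-γ) t := by
      simpa using (hasDerivAt_id t).const_mul (-γ)
    have := (h1.exp).const_mul C
    simpa [hWdef, mul_comm, mul_assoc, mul_left_comm] using this
  have hWcont : Continuous W := by fun_prop
  -- V < W on [-τ, 0]
  have hinit : ∀ t, -τ ≤ t → t ≤ 0 → V t < W t := by
    intro t h1 h2
    have h3 : V t ≤ K := hKmem t ⟨h1, h2⟩
    have h4 : (1:ℝ) ≤ Real.exp (-γ * t) := by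
      rw [Real.one_le_exp_iff]
      nlinarith
    have h5 : C ≤ W t := by
      have := mul_le_mul_of_nonneg_left h4 (le_of_lt hC0)
      simpa [hWdef] using this
    linarith
  -- main claim: V < W on [0, ∞)
  have hmain : ∀ t, 0 ≤ t → V t < W t := by
    by_contra hcon
    push_neg at hcon
    obtain ⟨t₁, ht₁0, ht₁⟩ := hcon
    set S : Set ℝ := Set.Ici (0:ℝ) ∩ {t | W t ≤ V t} with hSdef
    have hSne : S.Nonempty := ⟨t₁, ht₁0, ht₁⟩
    have hSclosed : IsClosed S :=
      isClosed_Ici.inter (isClosed_le hWcont hVcont)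
    have hSbdd : BddBelow S := ⟨0, fun x hx => hx.1⟩
    set t₀ : ℝ := sInf S with ht₀def
    have ht₀S : t₀ ∈ S := hSclosed.csInf_mem hSne hSbdd
    have ht₀0 : 0 ≤ t₀ := ht₀S.1
    have ht₀W : W t₀ ≤ V t₀ := ht₀S.2
    have ht₀pos : 0 < t₀ := by
      rcases lt_or_eq_of_le ht₀0 with h | h
      · exact h
      · exfalso
        have := hinit 0 (neg_nonpos.mpr hτ) le_rfl
        rw [← h] at ht₀W
        linarith
    -- strictly below W before t₀
    have hlt : ∀ t, -τ ≤ t → t < t₀ → V t < W t := by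
      intro t h1 h2
      rcases le_or_gt t 0 with h3 | h3
      · exact hinit t h1 h3
      · by_contra h4
        push_neg at h4
        have : t ∈ S := ⟨le_of_lt h3, h4⟩
        exact absurd (csInf_le hSbdd this) (not_le.mpr h2)
    -- equality at t₀ by continuity from the left
    have hVW : V t₀ = W t₀ := by
      refine le_antisymm ?_ ht₀W
      have htend : Tendsto (fun t => V t - W t) (nhdsWithin t₀ (Set.Iio t₀))
          (nhds (V t₀ - W t₀)) :=
        ((hVcont.sub hWcont).tendsto t₀).mono_left nhdsWithin_le_nhds
      have hev : ∀ᶠ t in nhdsWithin t₀ (Set.Iio t₀), V t - W t ≤ 0 := by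
        filter_upwards [Ioo_mem_nhdsLT_of_mem (Set.mem_Ioc.mpr ⟨ht₀pos, le_refl t₀⟩)]
          with t ht
        have := hlt t (by linarith [ht.1, hτ]) ht.2
        linarith
      have := le_of_tendsto htend hev
      linarith
    have hle : ∀ t, -τ ≤ t → t ≤ t₀ → V t ≤ W t := by
      intro t h1 h2
      rcases lt_or_eq_of_le h2 with h | h
      · exact le_of_lt (hlt t h1 h)
      · rw [h, hVW]
    -- the derivative of g = V - W at t₀ is nonnegative
    set g : ℝ → ℝ := fun t => V t - W t with hgdef
    have hgd : HasDerivAt g (deriv V t₀ - (-γ * W t₀)) t₀ := by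
      have := ((hVd t₀).sub (hWd t₀))
      exact this.congr_deriv (by rw [(hVd t₀).deriv])
    have hg0 : (0:ℝ) ≤ deriv V t₀ - (-γ * W t₀) := by
      have hslope : Tendsto (slope g t₀) (nhdsWithin t₀ (Set.Iio t₀))
          (nhds (deriv V t₀ - (-γ * W t₀))) := by
        have := hasDerivAt_iff_tendsto_slope.mp hgd
        exact this.mono_left (nhdsWithin_mono _ (fun x hx => ne_of_lt hx))
      refine ge_of_tendsto hslope ?_
      filter_upwards [Ioo_mem_nhdsLT_of_mem (Set.mem_Ioc.mpr ⟨ht₀pos, le_refl t₀⟩)]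
        with t ht
      have hg_t : g t ≤ 0 := by
        have := hlt t (by linarith [ht.1, hτ]) ht.2
        simp only [hgdef]; linarith
      have hg_t₀ : g t₀ = 0 := by simp only [hgdef]; linarith [hVW]
      have hnum : g t - g t₀ ≤ 0 := by linarith
      have hden : t - t₀ < 0 := by linarith [ht.2]
      have hsl : slope g t₀ t = (g t - g t₀) / (t - t₀) := slope_def_field g t₀ t
      rw [hsl]
      exact div_nonneg_iff.mpr (Or.inr ⟨hnum, le_of_lt hden⟩)
    -- but the differential inequality forces it negative
    have hWτ : W (t₀ - τ) = Real.exp (γ * τ) * W t₀ := by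
      simp only [hWdef]
      rw [show -γ * (t₀ - τ) = γ * τ + -γ * t₀ by ring, Real.exp_add]
      ring
    have hVτ : V (t₀ - τ) ≤ W (t₀ - τ) := hle (t₀ - τ) (by linarith) (by linarith)
    have hder : deriv V t₀ ≤ (β * Real.exp (γ * τ) - α) * W t₀ := by
      have h1 := hVineq t₀
      have h2 : -α * V t₀ ≤ -α * W t₀ := by nlinarith [ht₀W]
      have h3 : β * V (t₀ - τ) ≤ β * (Real.exp (γ * τ) * W t₀) := by
        rw [← hWτ]; exact mul_le_mul_of_nonneg_left hVτ hβ0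
      nlinarith
    have hfinal : (β * Real.exp (γ * τ) - α) * W t₀ < -γ * W t₀ := by
      have : β * Real.exp (γ * τ) - α < -γ := by linarith
      nlinarith [hW0 t₀]
    linarith
  -- conclude: V → 0, hence e → 0
  have hWtend : Tendsto W atTop (nhds 0) := by
    have h1 : Tendsto (fun t : ℝ => -γ * t) atTop atBot :=
      tendsto_id.const_mul_atTop_of_neg (by linarith)
    have h2 : Tendsto (fun t : ℝ => Real.exp (-γ * t)) atTop (nhds 0) :=
      Real.tendsto_exp_atBot.comp h1
    simpa [hWdef] using h2.const_mul C
  have hVtend : Tendsto V atTop (nhds 0) := by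
    refine squeeze_zero' ?_ ?_ hWtend
    · filter_upwards with t using hVnn t
    · filter_upwards [eventually_ge_atTop (0:ℝ)] with t ht
      exact le_of_lt (hmain t ht)
  rw [tendsto_zero_iff_norm_tendsto_zero]
  have : Tendsto (fun t => Real.sqrt (V t)) atTop (nhds 0) := by
    have := (Real.continuous_sqrt.tendsto 0).comp hVtend
    rwa [Real.sqrt_zero] at this
  refine this.congr fun t => ?_
  simp [hVdef, Real.sqrt_sq_eq_abs, Real.norm_eq_abs]
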